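/- Let K be a field of prime characteristic p and for k ≥ 0 set τ_k = Σ_{r=0}^{k} X^{p^r + p^{2r}} ∈ K[X]. Then for every k ≥ 1 the polynomial ∂_{p^k}(τ_k) is nonzero of degree exactly p^{2k}. -/

import Mathlib

open Polynomial

lemma choose_key (K : Type*) [Field K] (p : ℕ) [Fact p.Prime] [CharP K p]
    (k : ℕ) (hk : 1 ≤ k) :
    ((p ^ k + p ^ (2 * k)).choose (p ^ k) : K) = 1 := by
  have hp1 : 1 < p := (Fact.out : p.Prime).one_lt
  have h := coeff_X_add_one_pow K (p ^ k + p ^ (2 * k)) (p ^ k)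
  rw [pow_add, add_pow_char_pow, add_pow_char_pow, one_pow, one_pow] at h
  rw [← h]
  have hpk : 0 < p ^ k := pow_pos (by omega) k
  have hne : p ^ k < p ^ (2 * k) := Nat.pow_lt_pow_right hp1 (by omega)
  rw [add_mul, one_mul, mul_add, mul_one, ← pow_add]
  simp [coeff_X_pow, coeff_one, hpk.ne', hne.ne']
  simp [hne.ne, hp1.ne']
  simp [show p ≠ 0 by omega]

theorem hasseDeriv_tau_degree (K : Type*) [Field K] (p : ℕ) [Fact p.Prime] [CharP K p]
    (k : ℕ) (hk : 1 ≤ k) :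
    Polynomial.hasseDeriv (p ^ k)
        (∑ r ∈ Finset.range (k + 1), (X : K[X]) ^ (p ^ r + p ^ (2 * r))) ≠ 0 ∧
    (Polynomial.hasseDeriv (p ^ k)
        (∑ r ∈ Finset.range (k + 1), (X : K[X]) ^ (p ^ r + p ^ (2 * r)))).natDegree =
      p ^ (2 * k) := by
  have hp1 : 1 < p := (Fact.out : p.Prime).one_lt
  have hsum : Polynomial.hasseDeriv (p ^ k)
        (∑ r ∈ Finset.range (k + 1), (X : K[X]) ^ (p ^ r + p ^ (2 * r)))
      = ∑ r ∈ Finset.range (k + 1), Polynomial.monomial (p ^ r + p ^ (2 * r) - p ^ k)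
          (((p ^ r + p ^ (2 * r)).choose (p ^ k) : K)) := by
    rw [map_sum]
    refine Finset.sum_congr rfl fun r _ => ?_
    rw [X_pow_eq_monomial, hasseDeriv_monomial, mul_one]
  -- small exponents for r < k
  have hlt : ∀ r < k, p ^ r + p ^ (2 * r) < p ^ (2 * k) := by
    intro r hr
    have h1 : p ^ r ≤ p ^ (2 * k - 2) := Nat.pow_le_pow_right (by omega) (by omega)
    have h2 : p ^ (2 * r) ≤ p ^ (2 * k - 2) := Nat.pow_le_pow_right (by omega) (by omega)
    have h3 : 2 * p ^ (2 * k - 2) ≤ p * p ^ (2 * k - 2) :=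
      Nat.mul_le_mul_right _ (by omega)
    have h4 : p * p ^ (2 * k - 2) = p ^ (2 * k - 1) := by
      rw [← pow_succ']
      congr 1
      omega
    have h5 : p ^ (2 * k - 1) < p ^ (2 * k) := Nat.pow_lt_pow_right hp1 (by omega)
    omega
  have hcoeff : (Polynomial.hasseDeriv (p ^ k)
        (∑ r ∈ Finset.range (k + 1), (X : K[X]) ^ (p ^ r + p ^ (2 * r)))).coeff
      (p ^ (2 * k)) = 1 := by
    rw [hsum, finset_sum_coeff, Finset.sum_eq_single k]
    · simp [coeff_monomial, Nat.add_sub_cancel_left, choose_key K p k hk]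
    · intro r hr hrk
      have hr' : r < k := by
        simp only [Finset.mem_range] at hr
        omega
      have := hlt r hr'
      rw [coeff_monomial, if_neg]
      omega
    · intro h
      exact absurd (Finset.self_mem_range_succ k) h
  have hne : Polynomial.hasseDeriv (p ^ k)
        (∑ r ∈ Finset.range (k + 1), (X : K[X]) ^ (p ^ r + p ^ (2 * r))) ≠ 0 := by
    intro h0
    rw [h0, coeff_zero] at hcoeff
    exact one_ne_zero hcoeff.symm
  refine ⟨hne, le_antisymm ?_ (le_natDegree_of_ne_zero (by rw [hcoeff]; exact one_ne_zero))⟩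
  rw [hsum]
  refine (natDegree_sum_le _ _).trans ?_
  rw [Finset.fold_max_le]
  constructor
  · positivity
  · intro r hr
    refine (natDegree_monomial_le _).trans ?_
    simp only [Finset.mem_range] at hr
    rcases lt_or_eq_of_le (Nat.lt_succ_iff.mp hr) with h | h
    · have := hlt r h
      omega
    · subst h
      omega
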